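/- Let a_1, ..., a_n be nonnegative real numbers and ζ > 0, and suppose (1/2)·Σ_{t=1}^n log(1 + a_t) ≤ η. Then (1/2)·Σ_{t=1}^n min{a_t, ζ} ≤ (ζ / log(1+ζ)) · η. -/

import Mathlib

lemma aux_concave {a ζ : ℝ} (ha : 0 ≤ a) (haζ : a ≤ ζ) (hζ : 0 < ζ) :
    a * Real.log (1 + ζ) ≤ ζ * Real.log (1 + a) := by
  have hcc := strictConcaveOn_log_Ioi.concaveOn
  have ht0 : 0 ≤ a / ζ := div_nonneg ha hζ.le
  have ht1 : a / ζ ≤ 1 := (div_le_one hζ).2 haζ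
  have key := hcc.2 (show (1:ℝ) ∈ Set.Ioi 0 by norm_num)
    (show (1 + ζ) ∈ Set.Ioi 0 by simp; linarith) (by linarith : (0:ℝ) ≤ 1 - a/ζ) ht0
    (by ring)
  have hx : (1 - a/ζ) • (1:ℝ) + (a/ζ) • (1 + ζ) = 1 + a := by
    field_simp
    ring_nf
    rw [mul_comm ζ a, mul_inv_cancel_right₀ hζ.ne', mul_inv_cancel₀ hζ.ne']
    ring
  rw [hx] at key
  simp only [smul_eq_mul, Real.log_one, mul_zero, zero_add] at key
  have := mul_le_mul_of_nonneg_left key hζ.le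
  calc a * Real.log (1 + ζ) = ζ * (a / ζ * Real.log (1 + ζ)) := by field_simp
    _ ≤ ζ * Real.log (1 + a) := this

theorem stmt_3 (n : ℕ) (a : Fin n → ℝ) (ha : ∀ t, 0 ≤ a t) (ζ η : ℝ) (hζ : 0 < ζ)
    (h : (1/2) * ∑ t, Real.log (1 + a t) ≤ η) :
    (1/2) * ∑ t, min (a t) ζ ≤ (ζ / Real.log (1 + ζ)) * η := by
  have hlog : 0 < Real.log (1 + ζ) := Real.log_pos (by linarith)
  have hC : 0 ≤ ζ / Real.log (1 + ζ) := div_nonneg hζ.le hlog.le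
  have point : ∀ t, min (a t) ζ ≤ (ζ / Real.log (1 + ζ)) * Real.log (1 + a t) := by
    intro t
    rcases le_or_gt (a t) ζ with hle | hgt
    · rw [min_eq_left hle]
      rw [div_mul_eq_mul_div, le_div_iff₀ hlog]
      have := aux_concave (ha t) hle hζ
      linarith
    · rw [min_eq_right hgt.le]
      have h1 : Real.log (1 + ζ) ≤ Real.log (1 + a t) :=
        Real.log_le_log (by linarith) (by linarith)
      rw [div_mul_eq_mul_div, le_div_iff₀ hlog]
      nlinarith
  calc (1/2) * ∑ t, min (a t) ζ
      ≤ (1/2) * ∑ t, (ζ / Real.log (1 + ζ)) * Real.log (1 + a t) := by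
        gcongr with t _; exact point t
    _ = (ζ / Real.log (1 + ζ)) * ((1/2) * ∑ t, Real.log (1 + a t)) := by
        rw [← Finset.mul_sum]; ring
    _ ≤ (ζ / Real.log (1 + ζ)) * η := by
        exact mul_le_mul_of_nonneg_left h hC
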